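/- (Large girth estimate, second case) Let G be a finite simple cubic graph (every vertex has degree exactly 3) with first Betti number b ≥ 4, and suppose S > 0 is a real number such that every finite simple graph with first Betti number at least b−3, equipped with any probability edge weighting, contains a cycle of weight at most S. Then for every probability edge weighting λ of G there exists a cycle C in G with λ(C) ≤ ((3b−8)/(3b−3))·S. -/

import Mathlib

attribute [local instance] Classical.propDecidable

open Finset SimpleGraph

private lemma sym2_aux {α} {x y : α} {e : Sym2 α} (hxy : x ≠ y) (hx : x ∈ e) (hy : y ∈ e) :
    e = s(x,y) := (Sym2.mem_and_mem_iff hxy).1 ⟨hx, hy⟩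

private lemma card_touch {V : Type} [Fintype V] (G : SimpleGraph V)
    (hdeg : ∀ x : V, G.degree x = 3) {u v : V} (huv : G.Adj u v) :
    ({f ∈ G.edgeFinset | u ∈ f ∨ v ∈ f}).card = 5 := by
  classical
  have hfe : {f ∈ G.edgeFinset | u ∈ f ∨ v ∈ f}
      = G.incidenceFinset u ∪ G.incidenceFinset v := by
    ext f
    simp only [mem_filter, mem_union, SimpleGraph.incidenceFinset_eq_filter]
    tauto
  have hinter : G.incidenceFinset u ∩ G.incidenceFinset v = {s(u, v)} := by
    ext f
    simp only [mem_inter, SimpleGraph.mem_incidenceFinset, SimpleGraph.incidenceSet,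
      Set.mem_setOf_eq, mem_singleton]
    constructor
    · rintro ⟨⟨-, hu⟩, -, hv⟩
      exact sym2_aux huv.ne hu hv
    · rintro rfl
      exact ⟨⟨huv, Sym2.mem_mk_left u v⟩, huv, Sym2.mem_mk_right u v⟩
  have := Finset.card_union_add_card_inter (G.incidenceFinset u) (G.incidenceFinset v)
  rw [hinter, hfe] at *
  simp only [Finset.card_singleton, SimpleGraph.card_incidenceFinset_eq_degree, hdeg] at this
  omega

private lemma sum_touch {V : Type} [Fintype V] (G : SimpleGraph V)
    (hdeg : ∀ x : V, G.degree x = 3) (lam : Sym2 V → ℝ) :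
    ∑ e ∈ G.edgeFinset, ∑ f ∈ {f ∈ G.edgeFinset | ∃ z, z ∈ e ∧ z ∈ f}, lam f
      = 5 * ∑ f ∈ G.edgeFinset, lam f := by
  classical
  have h1 : ∀ e ∈ G.edgeFinset, ∑ f ∈ {f ∈ G.edgeFinset | ∃ z, z ∈ e ∧ z ∈ f}, lam f
      = ∑ f ∈ G.edgeFinset, if (∃ z, z ∈ e ∧ z ∈ f) then lam f else 0 := by
    intro e _
    rw [Finset.sum_filter]
  rw [Finset.sum_congr rfl h1, Finset.sum_comm]
  have h2 : ∀ f ∈ G.edgeFinset,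
      ∑ e ∈ G.edgeFinset, (if (∃ z, z ∈ e ∧ z ∈ f) then lam f else 0) = 5 * lam f := by
    intro f hf
    rw [← Finset.sum_filter, Finset.sum_const, nsmul_eq_mul]
    congr 1
    induction f with
    | h x y =>
      have hxy : G.Adj x y := by rwa [SimpleGraph.mem_edgeFinset, SimpleGraph.mem_edgeSet] at hf
      have heq : {e ∈ G.edgeFinset | ∃ z, z ∈ e ∧ z ∈ s(x, y)}
          = {e ∈ G.edgeFinset | x ∈ e ∨ y ∈ e} := by
        apply Finset.filter_congr
        intro e _
        simp only [Sym2.mem_iff]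
        constructor
        · rintro ⟨z, hz, rfl | rfl⟩
          · exact Or.inl hz
          · exact Or.inr hz
        · rintro (h | h)
          exacts [⟨x, h, Or.inl rfl⟩, ⟨y, h, Or.inr rfl⟩]
      rw [heq, card_touch G hdeg hxy]
      norm_num
  rw [Finset.sum_congr rfl h2, ← Finset.mul_sum]

private lemma image_edges {V : Type} [Fintype V] (G : SimpleGraph V) (u v : V) :
    Finset.image (Sym2.map (Subtype.val : {x : V | x ≠ u ∧ x ≠ v} → V))
        (SimpleGraph.induce {x : V | x ≠ u ∧ x ≠ v} G).edgeFinset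
      = {f ∈ G.edgeFinset | ¬(u ∈ f ∨ v ∈ f)} := by
  classical
  ext f
  simp only [Finset.mem_image, SimpleGraph.mem_edgeFinset, Finset.mem_filter]
  constructor
  · rintro ⟨e', he', rfl⟩
    induction e' with
    | h a c =>
      rw [SimpleGraph.mem_edgeSet] at he'
      have hadj : G.Adj a.val c.val := he'
      refine ⟨hadj, ?_⟩
      rw [Sym2.map_pair_eq]
      push_neg
      simp only [Sym2.mem_iff]
      constructor
      · rintro (h | h)
        · exact absurd h.symm a.2.1
        · exact absurd h.symm c.2.1
      · rintro (h | h)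
        · exact absurd h.symm a.2.2
        · exact absurd h.symm c.2.2
  · rintro ⟨hf, hnot⟩
    induction f with
    | h x y =>
      rw [SimpleGraph.mem_edgeSet] at hf
      push_neg at hnot
      simp only [Sym2.mem_iff] at hnot
      obtain ⟨hu, hv⟩ := hnot
      push_neg at hu hv
      refine ⟨s(⟨x, (hu.1).symm, (hv.1).symm⟩, ⟨y, (hu.2).symm, (hv.2).symm⟩), ?_, rfl⟩
      exact hf

private lemma comp_surj {V : Type} [Fintype V] (G : SimpleGraph V)
    (hdeg : ∀ x : V, G.degree x = 3) (u v : V) :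
    Function.Surjective (SimpleGraph.ConnectedComponent.map
      (SimpleGraph.Embedding.induce {x : V | x ≠ u ∧ x ≠ v} (G := G)).toHom) := by
  classical
  have pick : ∀ a bad : V, ∃ w, G.Adj a w ∧ w ≠ bad := by
    intro a bad
    have hcard : (G.neighborFinset a).card = 3 := by simp [hdeg]
    have hns : ¬ G.neighborFinset a ⊆ {bad} := by
      intro h
      have := Finset.card_le_card h
      simp [hcard] at this
    obtain ⟨w, hw, hwb⟩ := Finset.not_subset.mp hns
    exact ⟨w, (G.mem_neighborFinset a w).mp hw, by simpa using hwb⟩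
  intro cc
  obtain ⟨x, rfl⟩ := cc.exists_rep
  have key : ∀ (y : V) (hy : y ≠ u ∧ y ≠ v),
      SimpleGraph.ConnectedComponent.map
        (SimpleGraph.Embedding.induce {x : V | x ≠ u ∧ x ≠ v} (G := G)).toHom
        ((SimpleGraph.induce {x : V | x ≠ u ∧ x ≠ v} G).connectedComponentMk ⟨y, hy⟩)
      = G.connectedComponentMk y := fun y hy => rfl
  by_cases hx : x ≠ u ∧ x ≠ v
  · exact ⟨_, key x hx⟩
  · have hx' : x = u ∨ x = v := by tauto
    obtain rfl | rfl := hx'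
    · obtain ⟨w, hadj, hwv⟩ := pick x v
      refine ⟨_, (key w ⟨hadj.ne', hwv⟩).trans ?_⟩
      exact (SimpleGraph.ConnectedComponent.eq.mpr hadj.reachable).symm
    · obtain ⟨w, hadj, hwu⟩ := pick x u
      refine ⟨_, (key w ⟨hwu, hadj.ne'⟩).trans ?_⟩
      exact (SimpleGraph.ConnectedComponent.eq.mpr hadj.reachable).symm

private lemma walk_transfer {V : Type} [Fintype V] (G : SimpleGraph V) (su : Set V)
    (lam : Sym2 V → ℝ) {x : su} (w : (SimpleGraph.induce su G).Walk x x) (hc : w.IsCycle) :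
    ∃ (y : V) (w' : G.Walk y y), w'.IsCycle ∧
      ∑ e ∈ w'.edges.toFinset, lam e
        = ∑ e ∈ w.edges.toFinset, lam (Sym2.map Subtype.val e) := by
  classical
  set emb := SimpleGraph.Embedding.induce su (G := G)
  have hval : ⇑emb.toHom = (Subtype.val : su → V) := rfl
  refine ⟨emb x, w.map emb.toHom, SimpleGraph.Walk.IsCycle.map emb.injective hc, ?_⟩
  rw [SimpleGraph.Walk.edges_map]
  have h1 : (List.map (Sym2.map ⇑emb.toHom) w.edges).toFinset
      = w.edges.toFinset.image (Sym2.map Subtype.val) := by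
    ext a
    simp [hval]
  rw [h1, Finset.sum_image (fun a _ b _ h => Sym2.map.injective Subtype.val_injective h)]

private lemma sum_toFinset_congr {α β : Type*} [AddCommMonoid β] (l : List α) (f : α → β)
    (i1 i2 : DecidableEq α) :
    ∑ x ∈ (@List.toFinset _ i1 l), f x = ∑ x ∈ (@List.toFinset _ i2 l), f x := by
  have h : i1 = i2 := Subsingleton.elim _ _
  subst h
  rfl

/-- Large girth estimate, part (2) (Lemma 3.4 of the paper): if `G` is a cubic graph with
first Betti number `b ≥ 4` (encoded by `|E| + c = |V| + b`), and if every graph of first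
Betti number at least `b − 3` with a probability edge weighting has a cycle of weight at
most `S > 0`, then every probability edge weighting of `G` admits a cycle of weight at
most `((3b−8)/(3b−3))·S`. -/
theorem large_girth_estimate_two {V : Type} [Fintype V] (G : SimpleGraph V)
    (hcubic : ∀ v : V, G.degree v = 3)
    (b : ℕ) (hb : 4 ≤ b)
    (hbetti : G.edgeFinset.card + Nat.card G.ConnectedComponent = Fintype.card V + b)
    (S : ℝ) (hSpos : 0 < S)
    (hsys : ∀ (V' : Type) [Fintype V'] (G' : SimpleGraph V') (b' : ℕ),
      G'.edgeFinset.card + Nat.card G'.ConnectedComponent = Fintype.card V' + b' →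
      b - 3 ≤ b' →
      ∀ lam' : Sym2 V' → ℝ, (∀ e ∈ G'.edgeFinset, 0 ≤ lam' e) →
        (∑ e ∈ G'.edgeFinset, lam' e = 1) →
        ∃ (x : V') (w : G'.Walk x x), w.IsCycle ∧ ∑ e ∈ w.edges.toFinset, lam' e ≤ S)
    (lam : Sym2 V → ℝ) (hnn : ∀ e ∈ G.edgeFinset, 0 ≤ lam e)
    (hsum : ∑ e ∈ G.edgeFinset, lam e = 1) :
    ∃ (x : V) (w : G.Walk x x), w.IsCycle ∧
      ∑ e ∈ w.edges.toFinset, lam e ≤ ((3 * (b : ℝ) - 8) / (3 * (b : ℝ) - 3)) * S := by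
  classical
  -- notation
  have hVne : Nonempty V := by
    by_contra h
    rw [not_nonempty_iff] at h
    have h1 : G.edgeFinset = ∅ := Finset.eq_empty_of_isEmpty _
    have h2 : Nat.card G.ConnectedComponent = 0 := by
      have : IsEmpty G.ConnectedComponent :=
        ⟨fun cc => cc.ind fun v => (h.false v).elim⟩
      exact Nat.card_of_isEmpty
    have h3 : Fintype.card V = 0 := Fintype.card_eq_zero
    rw [h1, h2, h3] at hbetti
    simp at hbetti
    omega
  obtain ⟨v0⟩ := hVne
  have hhand : 3 * Fintype.card V = 2 * G.edgeFinset.card := by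
    have h := SimpleGraph.sum_degrees_eq_twice_card_edges G
    simp only [hcubic, Finset.sum_const, Finset.card_univ, smul_eq_mul] at h
    omega
  have hn4 : 4 ≤ Fintype.card V := by
    have h3 : (G.neighborFinset v0).card = 3 := by simp [hcubic]
    have hsub : G.neighborFinset v0 ⊆ Finset.univ.erase v0 := by
      intro w hw
      exact Finset.mem_erase.mpr ⟨((G.mem_neighborFinset v0 w).mp hw).ne', Finset.mem_univ w⟩
    have := Finset.card_le_card hsub
    rw [Finset.card_erase_of_mem (Finset.mem_univ v0), Finset.card_univ, h3] at this
    omega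
  have hc1 : 1 ≤ Nat.card G.ConnectedComponent := by
    have : Nonempty G.ConnectedComponent := ⟨G.connectedComponentMk v0⟩
    exact Nat.one_le_iff_ne_zero.mpr Nat.card_pos.ne'
  have hEc6 : 6 ≤ G.edgeFinset.card := by omega
  -- choose an edge with heavy neighborhood
  have hconst : ∑ _e ∈ G.edgeFinset, (5 / (G.edgeFinset.card : ℝ))
      = ∑ e ∈ G.edgeFinset, ∑ f ∈ {f ∈ G.edgeFinset | ∃ z, z ∈ e ∧ z ∈ f}, lam f := by
    rw [sum_touch G hcubic lam, hsum, Finset.sum_const, nsmul_eq_mul, mul_one,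
      mul_comm, div_mul_cancel₀]
    have h6 : (6 : ℝ) ≤ (G.edgeFinset.card : ℝ) := by exact_mod_cast hEc6
    intro h0
    rw [h0] at h6
    norm_num at h6
  have hEne : G.edgeFinset.Nonempty := Finset.card_pos.mp (by omega)
  obtain ⟨e, heE, hte⟩ := Finset.exists_le_of_sum_le hEne (le_of_eq hconst)
  obtain ⟨u, v, rfl⟩ : ∃ u v, e = s(u, v) := Sym2.ind (fun u v => ⟨u, v, rfl⟩) e
  have hadj : G.Adj u v := by rwa [SimpleGraph.mem_edgeFinset, SimpleGraph.mem_edgeSet] at heE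
  have hfilter_eq : {f ∈ G.edgeFinset | ∃ z, z ∈ s(u, v) ∧ z ∈ f}
      = {f ∈ G.edgeFinset | u ∈ f ∨ v ∈ f} := by
    apply Finset.filter_congr
    intro f _
    simp only [Sym2.mem_iff]
    constructor
    · rintro ⟨z, rfl | rfl, hz⟩
      · exact Or.inl hz
      · exact Or.inr hz
    · rintro (h | h)
      exacts [⟨u, Or.inl rfl, h⟩, ⟨v, Or.inr rfl, h⟩]
  set t : ℝ := ∑ f ∈ {f ∈ G.edgeFinset | u ∈ f ∨ v ∈ f}, lam f with ht
  have hte' : 5 / (G.edgeFinset.card : ℝ) ≤ t := by rwa [hfilter_eq] at hte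
  have hDsum : ∑ f ∈ {f ∈ G.edgeFinset | ¬(u ∈ f ∨ v ∈ f)}, lam f = 1 - t := by
    have := Finset.sum_filter_add_sum_filter_not G.edgeFinset
      (fun f => u ∈ f ∨ v ∈ f) lam
    rw [hsum] at this
    linarith [this]
  have hAcard : ({f ∈ G.edgeFinset | u ∈ f ∨ v ∈ f}).card = 5 := card_touch G hcubic hadj
  have hDcard : ({f ∈ G.edgeFinset | ¬(u ∈ f ∨ v ∈ f)}).card = G.edgeFinset.card - 5 := by
    have := Finset.card_filter_add_card_filter_not
      (s := G.edgeFinset) (p := fun f => u ∈ f ∨ v ∈ f)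
    omega
  have hr0 : 0 ≤ 1 - t := by
    rw [← hDsum]
    exact Finset.sum_nonneg fun f hf => hnn f (Finset.mem_filter.mp hf).1
  -- the induced graph
  have himg := image_edges G u v
  have hinj : Function.Injective
      (Sym2.map (Subtype.val : {x : V | x ≠ u ∧ x ≠ v} → V)) :=
    Sym2.map.injective Subtype.val_injective
  have hE' : (SimpleGraph.induce {x : V | x ≠ u ∧ x ≠ v} G).edgeFinset.card
      = G.edgeFinset.card - 5 := by
    have h := Finset.card_image_of_injective
      (SimpleGraph.induce {x : V | x ≠ u ∧ x ≠ v} G).edgeFinset hinj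
    rw [himg, hDcard] at h
    omega
  have hcard' : Fintype.card {x : V | x ≠ u ∧ x ≠ v} = Fintype.card V - 2 := by
    rw [Fintype.card_subtype]
    have heq : ({x ∈ (Finset.univ : Finset V) | x ∈ {x : V | x ≠ u ∧ x ≠ v}})
        = Finset.univ \ {u, v} := by
      ext x
      simp [Set.mem_setOf_eq, not_or]
    rw [heq, Finset.card_sdiff_of_subset (Finset.subset_univ _), Finset.card_univ,
      Finset.card_pair hadj.ne]
  have hccle : Nat.card G.ConnectedComponent
      ≤ Nat.card (SimpleGraph.induce {x : V | x ≠ u ∧ x ≠ v} G).ConnectedComponent :=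
    Nat.card_le_card_of_surjective _ (comp_surj G hcubic u v)
  set c' := Nat.card (SimpleGraph.induce {x : V | x ≠ u ∧ x ≠ v} G).ConnectedComponent with hc'
  set b' : ℕ := b - 3 + (c' - Nat.card G.ConnectedComponent) with hb'
  have hbetti' : (SimpleGraph.induce {x : V | x ≠ u ∧ x ≠ v} G).edgeFinset.card + c'
      = Fintype.card {x : V | x ≠ u ∧ x ≠ v} + b' := by
    rw [hE', hcard']
    omega
  have hb3 : b - 3 ≤ b' := by omega
  -- real-number bound
  have hbR : (4 : ℝ) ≤ (b : ℝ) := by exact_mod_cast hb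
  have hEcle : (G.edgeFinset.card : ℝ) ≤ 3 * (b : ℝ) - 3 := by
    have : G.edgeFinset.card + 3 ≤ 3 * b := by omega
    have := (Nat.cast_le (α := ℝ)).mpr this
    push_cast at this
    linarith
  have hEcpos : (0 : ℝ) < (G.edgeFinset.card : ℝ) := by
    have : (6 : ℝ) ≤ (G.edgeFinset.card : ℝ) := by exact_mod_cast hEc6
    linarith
  have hden : (0 : ℝ) < 3 * (b : ℝ) - 3 := by linarith
  have hrb : 1 - t ≤ (3 * (b : ℝ) - 8) / (3 * (b : ℝ) - 3) := by
    have h5 : 5 / (3 * (b : ℝ) - 3) ≤ 5 / (G.edgeFinset.card : ℝ) := by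
      apply div_le_div_of_nonneg_left (by norm_num) hEcpos hEcle
    have heq : 1 - 5 / (3 * (b : ℝ) - 3) = (3 * (b : ℝ) - 8) / (3 * (b : ℝ) - 3) := by
      rw [eq_div_iff hden.ne', sub_mul, div_mul_cancel₀ _ hden.ne']
      ring
    linarith
  rcases eq_or_lt_of_le hr0 with hzero | hpos
  · -- remaining weight is zero: every cycle in the induced graph has weight 0
    have hlamD : ∀ f ∈ {f ∈ G.edgeFinset | ¬(u ∈ f ∨ v ∈ f)}, lam f = 0 := by
      have := (Finset.sum_eq_zero_iff_of_nonneg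
        (fun f hf => hnn f (Finset.mem_filter.mp hf).1)).mp (by rw [hDsum, ← hzero])
      exact this
    have hEc6R : (6 : ℝ) ≤ (G.edgeFinset.card : ℝ) := by exact_mod_cast hEc6
    have hE5pos : (0 : ℝ) < (G.edgeFinset.card : ℝ) - 5 := by linarith
    obtain ⟨x, w, hcyc, -⟩ := hsys {x : V | x ≠ u ∧ x ≠ v}
      (SimpleGraph.induce {x : V | x ≠ u ∧ x ≠ v} G) b' hbetti' hb3
      (fun _ => 1 / ((G.edgeFinset.card : ℝ) - 5))
      (fun _ _ => le_of_lt (by positivity))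
      (by
        rw [Finset.sum_const, nsmul_eq_mul]
        convert (show ((G.edgeFinset.card - 5 : ℕ) : ℝ) * (1 / ((G.edgeFinset.card : ℝ) - 5)) = 1 by
          have h5 : ((G.edgeFinset.card - 5 : ℕ) : ℝ) = (G.edgeFinset.card : ℝ) - 5 := by
            push_cast [Nat.cast_sub (by omega : 5 ≤ G.edgeFinset.card)]
            ring
          rw [h5, mul_one_div, div_self hE5pos.ne']) using 3
        · rfl
        · exact hE')
    obtain ⟨y, w', hcyc', hsum_eq⟩ := walk_transfer G _ lam w hcyc
    refine ⟨y, w', hcyc', ?_⟩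
    rw [hsum_eq]
    refine le_trans (le_of_eq (Finset.sum_eq_zero fun e' he' => ?_))
      (mul_nonneg (div_nonneg (by linarith) (by linarith)) hSpos.le)
    apply hlamD
    rw [← himg]
    exact Finset.mem_image_of_mem _
      (SimpleGraph.mem_edgeFinset.mpr (w.edges_subset_edgeSet (List.mem_toFinset.mp he')))
  · -- positive remaining weight: renormalise
    set lam' : Sym2 {x : V | x ≠ u ∧ x ≠ v} → ℝ :=
      fun e' => lam (Sym2.map Subtype.val e') / (1 - t) with hlam'
    have hmem : ∀ e' ∈ (SimpleGraph.induce {x : V | x ≠ u ∧ x ≠ v} G).edgeFinset,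
        Sym2.map Subtype.val e' ∈ {f ∈ G.edgeFinset | ¬(u ∈ f ∨ v ∈ f)} := by
      intro e' he'
      rw [← himg]
      exact Finset.mem_image_of_mem _ he'
    have hsum' : ∑ e' ∈ (SimpleGraph.induce {x : V | x ≠ u ∧ x ≠ v} G).edgeFinset, lam' e' = 1 := by
      rw [hlam', ← Finset.sum_div]
      have h : ∑ f ∈ Finset.image (Sym2.map (Subtype.val : {x : V | x ≠ u ∧ x ≠ v} → V))
          (SimpleGraph.induce {x : V | x ≠ u ∧ x ≠ v} G).edgeFinset, lam f
          = ∑ e' ∈ (SimpleGraph.induce {x : V | x ≠ u ∧ x ≠ v} G).edgeFinset,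
              lam (Sym2.map Subtype.val e') :=
        Finset.sum_image (fun a _ b _ h => hinj h)
      rw [himg, hDsum] at h
      rw [← h, div_self hpos.ne']
    obtain ⟨x, w, hcyc, hle⟩ := hsys {x : V | x ≠ u ∧ x ≠ v}
      (SimpleGraph.induce {x : V | x ≠ u ∧ x ≠ v} G) b' hbetti' hb3 lam'
      (fun e' he' => div_nonneg (hnn _ (Finset.mem_filter.mp (hmem e' he')).1) hr0)
      hsum'
    obtain ⟨y, w', hcyc', hsum_eq⟩ := walk_transfer G _ lam w hcyc
    refine ⟨y, w', hcyc', ?_⟩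
    have hfac : ∀ T : Finset (Sym2 {x : V | x ≠ u ∧ x ≠ v}),
        ∑ e' ∈ T, lam (Sym2.map Subtype.val e') = (1 - t) * ∑ e' ∈ T, lam' e' := by
      intro T
      rw [Finset.mul_sum]
      refine Finset.sum_congr rfl fun e' _ => ?_
      rw [hlam']
      field_simp
    rw [hsum_eq, hfac]
    exact le_trans (mul_le_mul_of_nonneg_left
        (le_of_eq_of_le (sum_toFinset_congr w.edges lam' _ _) hle) hr0)
      (mul_le_mul_of_nonneg_right hrb hSpos.le)
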